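/- Let φ : ℝⁿ → ℝ be differentiable convex, ψ : ℝⁿ → ℝ ∪ {∞} closed convex, f = φ + ψ. Suppose x₁ = Prox_{t₀}(x₀ − t₀∇φ(x₀)) with t₀ > 0 satisfies the decrease condition f(x₁) ≤ φ(x₀) + ψ(x₁) + ⟨g₀^ψ, x₀ − x₁⟩ − (t₀/2)‖g₀‖², where g₀ = ∇φ(x₀) + g₀^ψ, g₀^ψ ∈ ∂ψ(x₁), and x₁ = x₀ − t₀ g₀. Then f(x₁) ≤ −f*(g₀) + ⟨g₀, x₀⟩ − (t₀/2)‖g₀‖². -/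

import Mathlib

open scoped RealInnerProductSpace

variable {E : Type*} [NormedAddCommGroup E] [InnerProductSpace ℝ E] [FiniteDimensional ℝ E]

/-- Convex conjugate of an extended-real-valued function. -/
noncomputable def conjFn (f : E → EReal) (z : E) : EReal :=
  ⨆ x : E, (((⟪z, x⟫ : ℝ) : EReal) - f x)

/-- Subdifferential of an extended-real-valued function. -/
def SubgradAt (f : E → EReal) (x : E) : Set E :=
  {g : E | ∀ y : E, f x + (((⟪g, y - x⟫ : ℝ)) : EReal) ≤ f y}

/-- Subdifferential of a real-valued function. -/
def RSubgradAt (f : E → ℝ) (x : E) : Set E :=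
  {g : E | ∀ y : E, f x + ⟪g, y - x⟫ ≤ f y}

/-- Convexity for extended-real-valued functions. -/
def EConvex (f : E → EReal) : Prop :=
  ∀ x y : E, ∀ a b : ℝ, 0 ≤ a → 0 ≤ b → a + b = 1 →
    f (a • x + b • y) ≤ ((a : ℝ) : EReal) * f x + ((b : ℝ) : EReal) * f y

/-- Properness of an extended-real-valued function. -/
def ProperFn (f : E → EReal) : Prop := (∃ x, f x ≠ ⊤) ∧ ∀ x, f x ≠ ⊥

/-- `p` is the proximal point `Prox_t(v)` of `ψ`, i.e. a minimizer of
`y ↦ ψ(y) + ‖y - v‖²/(2t)`. -/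
def IsProxPt (ψ : E → EReal) (t : ℝ) (v p : E) : Prop :=
  ∀ y : E, ψ p + ((‖p - v‖^2 / (2*t) : ℝ) : EReal) ≤ ψ y + ((‖y - v‖^2 / (2*t) : ℝ) : EReal)

lemma grad_ineq (φ : E → ℝ) (φ' : E → E)
    (hφd : ∀ v, HasGradientAt φ (φ' v) v) (hφc : ConvexOn ℝ Set.univ φ)
    (x₀ x : E) : φ x₀ + ⟪φ' x₀, x - x₀⟫ ≤ φ x := by
  set d := x - x₀ with hd
  have h1 : HasDerivAt (fun t : ℝ => x₀ + t • d) d 0 := by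
    simpa using ((hasDerivAt_id (0:ℝ)).smul_const d).const_add x₀
  have h2 : HasDerivAt (fun t : ℝ => φ (x₀ + t • d)) ⟪φ' x₀, d⟫ 0 := by
    have hF : HasFDerivAt φ (InnerProductSpace.toDual ℝ E (φ' x₀)) x₀ := hφd x₀
    have hF' : HasFDerivAt φ (InnerProductSpace.toDual ℝ E (φ' x₀)) (x₀ + (0:ℝ) • d) := by
      simpa using hF
    have := hF'.comp_hasDerivAt (x := (0:ℝ)) (f := fun t : ℝ => x₀ + t • d) (by simpa [add_comm] using h1)
    exact this
  have hcv : ConvexOn ℝ Set.univ (fun t : ℝ => φ (x₀ + t • d)) := by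
    have h := hφc.comp_affineMap (AffineMap.lineMap x₀ x)
    simp only [Set.preimage_univ] at h
    have he : (φ ∘ ⇑(AffineMap.lineMap x₀ x)) = fun t : ℝ => φ (x₀ + t • d) := by
      funext t
      simp [AffineMap.lineMap_apply, hd, add_comm]
    rwa [he] at h
  have := hcv.le_slope_of_hasDerivAt (x := (0:ℝ)) (y := 1) trivial trivial one_pos h2
  simp only [slope_def_field, zero_smul, add_zero, one_smul, div_one, sub_zero] at this
  have hx : x₀ + d = x := by simp [hd]
  rw [hx] at this
  linarith

lemma ereal_trichotomy (a : EReal) : a = ⊥ ∨ a = ⊤ ∨ ∃ r : ℝ, a = (r : EReal) := by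
  induction a using EReal.rec with
  | bot => left; rfl
  | coe r => right; right; exact ⟨r, rfl⟩
  | top => right; left; rfl

/-- The first-step bound `f(x₁) ≤ -f*(g₀) + ⟪g₀, x₀⟫ - (t₀/2)‖g₀‖²`. -/
theorem first_step_bound (φ : E → ℝ) (φ' : E → E)
    (hφd : ∀ v, HasGradientAt φ (φ' v) v) (hφc : ConvexOn ℝ Set.univ φ)
    (ψ : E → EReal) (hψc : EConvex ψ) (hψlsc : LowerSemicontinuous ψ)
    (f : E → EReal) (hf : ∀ v, f v = ((φ v : ℝ) : EReal) + ψ v)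
    (t₀ : ℝ) (ht₀ : 0 < t₀) (x₀ x₁ g₀ g₀ψ : E)
    (hprox : IsProxPt ψ t₀ (x₀ - t₀ • φ' x₀) x₁)
    (hg₀ψ : g₀ψ ∈ SubgradAt ψ x₁) (hg₀ : g₀ = φ' x₀ + g₀ψ)
    (hx₁ : x₁ = x₀ - t₀ • g₀)
    (hdec : f x₁ ≤ ((φ x₀ + ⟪g₀ψ, x₀ - x₁⟫ - t₀/2 * ‖g₀‖^2 : ℝ) : EReal) + ψ x₁) :
    f x₁ ≤ -(conjFn f g₀) + ((⟪g₀, x₀⟫ - t₀/2 * ‖g₀‖^2 : ℝ) : EReal) := by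
  rcases ereal_trichotomy (ψ x₁) with hb | ht | ⟨r, hr⟩
  · rw [hf x₁, hb, EReal.add_bot]
    exact bot_le
  · have hall : ∀ y, ψ y = ⊤ := by
      intro y
      have h := hg₀ψ y
      rw [ht, EReal.top_add_coe] at h
      exact top_le_iff.mp h
    have hconj : conjFn f g₀ = ⊥ := by
      have hb2 : ∀ x : E, (((⟪g₀, x⟫ : ℝ) : EReal) - f x) = ⊥ := by
        intro x
        rw [hf x, hall x]
        simp
      simp [conjFn, hb2]
    rw [hconj]
    have hrw : -(⊥:EReal) + ((⟪g₀, x₀⟫ - t₀/2 * ‖g₀‖^2 : ℝ) : EReal) = ⊤ := by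
      rw [show -(⊥:EReal) = ⊤ from rfl]
      exact EReal.top_add_coe _
    rw [hrw]
    exact le_top
  · set C : ℝ := (⟪φ' x₀, x₀⟫ - φ x₀) + (⟪g₀ψ, x₁⟫ - r) with hC
    have hconj : conjFn f g₀ ≤ ((C : ℝ) : EReal) := by
      apply iSup_le
      intro x
      rw [hf x]
      rcases ereal_trichotomy (ψ x) with hb' | ht' | ⟨s, hs⟩
      · exfalso
        have h := hg₀ψ x
        rw [hr, hb'] at h
        have h2 : ((r : ℝ) : EReal) + ((⟪g₀ψ, x - x₁⟫ : ℝ) : EReal) = ((r + ⟪g₀ψ, x - x₁⟫ : ℝ) : EReal) := by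
          push_cast ; ring
        rw [h2] at h
        simp at h
      · rw [ht', EReal.add_top_of_ne_bot (EReal.coe_ne_bot _)]
        have hbb : ((⟪g₀, x⟫ : ℝ) : EReal) - ⊤ = ⊥ := rfl
        rw [hbb]; exact bot_le
      · rw [hs]
        have hreal : ⟪g₀, x⟫ - (φ x + s) ≤ C := by
          have h1 : φ x₀ + ⟪φ' x₀, x - x₀⟫ ≤ φ x := grad_ineq φ φ' hφd hφc x₀ x
          have h2 : r + ⟪g₀ψ, x - x₁⟫ ≤ s := by
            have h := hg₀ψ x
            rw [hr, hs] at h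
            exact_mod_cast h
          rw [hg₀]
          rw [inner_sub_right] at h1 h2
          rw [inner_add_left]
          simp only [hC]
          linarith
        calc ((⟪g₀, x⟫ : ℝ) : EReal) - (((φ x : ℝ) : EReal) + ((s:ℝ):EReal))
            = (((⟪g₀, x⟫ - (φ x + s) : ℝ)) : EReal) := by push_cast ; ring
          _ ≤ ((C : ℝ) : EReal) := by exact_mod_cast hreal
    have hneg : ((-C : ℝ) : EReal) ≤ -(conjFn f g₀) := by
      rw [EReal.coe_neg]
      exact EReal.neg_le_neg_iff.mpr hconj
    have key : ((φ x₀ + ⟪g₀ψ, x₀ - x₁⟫ - t₀/2 * ‖g₀‖^2 : ℝ) : EReal) + ψ x₁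
        = ((-C : ℝ) : EReal) + ((⟪g₀, x₀⟫ - t₀/2 * ‖g₀‖^2 : ℝ) : EReal) := by
      rw [hr]
      have : φ x₀ + ⟪g₀ψ, x₀ - x₁⟫ - t₀/2 * ‖g₀‖^2 + r = -C + (⟪g₀, x₀⟫ - t₀/2 * ‖g₀‖^2) := by
        rw [hg₀, inner_add_left, inner_sub_right]
        simp only [hC]
        ring
      rw [← EReal.coe_add, ← EReal.coe_add, EReal.coe_eq_coe_iff]
      exact this
    calc f x₁ ≤ _ := hdec
      _ = ((-C : ℝ) : EReal) + ((⟪g₀, x₀⟫ - t₀/2 * ‖g₀‖^2 : ℝ) : EReal) := key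
      _ ≤ -(conjFn f g₀) + ((⟪g₀, x₀⟫ - t₀/2 * ‖g₀‖^2 : ℝ) : EReal) :=
        add_le_add_left hneg _
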